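/- Let Ŝ be the τ-nice sampling on [n] with 1 ≤ τ ≤ n, and let J ⊆ [n] be nonempty. Then the restricted sampling J ∩ Ŝ satisfies λ'(P(J ∩ Ŝ)) = 1 + (|J|−1)(τ−1)/max(n−1,1). -/

import Mathlib

open Finset Matrix BigOperators

/-- Probability matrix of a sampling given by its probability mass function. -/
noncomputable def probMatrixPMF {n : ℕ} (p : Finset (Fin n) → ℝ) : Matrix (Fin n) (Fin n) ℝ :=
  fun i j => ∑ S : Finset (Fin n), if i ∈ S ∧ j ∈ S then p S else 0

/-- The τ-nice sampling: uniform over subsets of cardinality τ. -/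
noncomputable def tauNice (n τ : ℕ) : Finset (Fin n) → ℝ :=
  fun S => if S.card = τ then 1 / (n.choose τ : ℝ) else 0

/-- Normalized largest eigenvalue: `λ′(M) = sup { hᵀ M h : hᵀ Diag(M) h ≤ 1 }`. -/
noncomputable def lambdaPrime {n : ℕ} (M : Matrix (Fin n) (Fin n) ℝ) : ℝ :=
  sSup {r : ℝ | ∃ h : Fin n → ℝ,
    h ⬝ᵥ (Matrix.diagonal fun i => M i i).mulVec h ≤ 1 ∧ r = h ⬝ᵥ M.mulVec h}

lemma count_aux {α : Type*} [DecidableEq α] (s : Finset α) (a : α) (ha : a ∈ s) (k : ℕ)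
    (p : Finset α → Prop) [DecidablePred p]
    (hp : ∀ t : Finset α, a ∉ t → (p (insert a t) ↔ p t)) :
    ((s.powersetCard (k+1)).filter (fun t => a ∈ t ∧ p t)).card
      = (((s.erase a).powersetCard k).filter p).card := by
  apply Finset.card_bij' (fun t _ => t.erase a) (fun t _ => insert a t)
  · intro t ht
    simp only [mem_filter] at ht
    exact insert_erase ht.2.1
  · intro t ht
    simp only [mem_filter, mem_powersetCard] at ht
    have hat : a ∉ t := fun h => (mem_erase.1 (ht.1.1 h)).1 rfl
    exact erase_insert hat
  · intro t ht
    simp only [mem_filter, mem_powersetCard] at ht ⊢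
    obtain ⟨⟨hsub, hcard⟩, hat, hpt⟩ := ht
    refine ⟨⟨fun x hx => ?_, ?_⟩, ?_⟩
    · rcases mem_erase.1 hx with ⟨hxa, hxt⟩
      exact mem_erase.2 ⟨hxa, hsub hxt⟩
    · rw [card_erase_of_mem hat, hcard]; rfl
    · have h2 : a ∉ t.erase a := notMem_erase _ _
      have := hp _ h2
      rw [insert_erase hat] at this
      exact this.1 hpt
  · intro t ht
    simp only [mem_filter, mem_powersetCard] at ht ⊢
    obtain ⟨⟨hsub, hcard⟩, hpt⟩ := ht
    have hat : a ∉ t := fun h => (mem_erase.1 (hsub h)).1 rfl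
    refine ⟨⟨?_, ?_⟩, mem_insert_self _ _, (hp t hat).2 hpt⟩
    · exact insert_subset ha (hsub.trans (erase_subset _ _))
    · rw [card_insert_of_notMem hat, hcard]

lemma probMatrix_count {n : ℕ} (τ : ℕ) (i j : Fin n) :
    probMatrixPMF (tauNice n τ) i j
      = ((((univ : Finset (Fin n)).powersetCard τ).filter
          (fun S => i ∈ S ∧ j ∈ S)).card : ℝ) / (n.choose τ : ℝ) := by
  unfold probMatrixPMF tauNice
  rw [← Finset.sum_subset (Finset.subset_univ (powersetCard τ (univ : Finset (Fin n))))
      (by intro S _ hS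
          rw [mem_powersetCard_univ] at hS
          simp [hS])]
  rw [Finset.sum_congr rfl (fun S hS => by
    rw [mem_powersetCard_univ] at hS
    simp [hS] :
    ∀ S ∈ powersetCard τ (univ : Finset (Fin n)), _ = if i ∈ S ∧ j ∈ S then 1/(n.choose τ:ℝ) else 0)]
  rw [← Finset.sum_filter, Finset.sum_const, nsmul_eq_mul, mul_one_div]

lemma count_diag {n τ : ℕ} (hτ1 : 1 ≤ τ) (i : Fin n) :
    (((univ : Finset (Fin n)).powersetCard τ).filter (fun S => i ∈ S ∧ i ∈ S)).card
      = (n-1).choose (τ-1) := by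
  obtain ⟨k, rfl⟩ : ∃ k, τ = k + 1 := ⟨τ-1, by omega⟩
  rw [Finset.filter_congr (fun S _ => (by simp : (i ∈ S ∧ i ∈ S) ↔ (i ∈ S ∧ True)))]
  rw [count_aux univ i (mem_univ i) k (fun _ => True) (fun t _ => Iff.rfl)]
  rw [Finset.filter_true, card_powersetCard, card_erase_of_mem (mem_univ i), card_univ,
    Fintype.card_fin]
  congr 1

lemma count_offdiag_one {n : ℕ} {i j : Fin n} (hij : i ≠ j) :
    (((univ : Finset (Fin n)).powersetCard 1).filter (fun S => i ∈ S ∧ j ∈ S)).card = 0 := by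
  rw [Finset.card_eq_zero, Finset.filter_eq_empty_iff]
  intro S hS
  rw [mem_powersetCard_univ] at hS
  rintro ⟨hi, hj⟩
  have : 1 < S.card := Finset.one_lt_card.2 ⟨i, hi, j, hj, hij⟩
  omega

lemma count_offdiag {n τ : ℕ} (hτ2 : 2 ≤ τ) {i j : Fin n} (hij : i ≠ j) :
    (((univ : Finset (Fin n)).powersetCard τ).filter (fun S => i ∈ S ∧ j ∈ S)).card
      = (n-2).choose (τ-2) := by
  obtain ⟨k, rfl⟩ : ∃ k, τ = k + 2 := ⟨τ-2, by omega⟩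
  rw [show k + 2 = (k+1) + 1 from rfl]
  rw [count_aux univ i (mem_univ i) (k+1) (fun t => j ∈ t)
    (fun t _ => by simp [hij.symm])]
  rw [Finset.filter_congr (fun S _ => (by simp : (j ∈ S) ↔ (j ∈ S ∧ True)))]
  rw [count_aux (univ.erase i) j (mem_erase.2 ⟨hij.symm, mem_univ j⟩) k (fun _ => True) (fun t _ => Iff.rfl)]
  rw [Finset.filter_true, card_powersetCard, card_erase_of_mem
    (mem_erase.2 ⟨hij.symm, mem_univ j⟩), card_erase_of_mem (mem_univ i), card_univ,
    Fintype.card_fin]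
  have h1 : n - 1 - 1 = n - 2 := by omega
  rw [h1]
  congr 1

lemma entry_eq {n τ : ℕ} (hτ1 : 1 ≤ τ) (hτn : τ ≤ n) (i j : Fin n) :
    probMatrixPMF (tauNice n τ) i j =
      if i = j then (τ:ℝ)/n
      else (τ:ℝ)*((τ:ℝ)-1)/((n:ℝ)*((max (n-1) 1 : ℕ):ℝ)) := by
  have hn1 : 1 ≤ n := le_trans hτ1 hτn
  have hcpos : 0 < n.choose τ := Nat.choose_pos hτn
  have hcR : (0:ℝ) < (n.choose τ : ℝ) := by exact_mod_cast hcpos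
  have hnR : (0:ℝ) < (n:ℝ) := by exact_mod_cast hn1
  rw [probMatrix_count]
  by_cases hij : i = j
  · subst hij
    rw [count_diag hτ1 i, if_pos rfl]
    have key : n * (n-1).choose (τ-1) = n.choose τ * τ := by
      have h := Nat.add_one_mul_choose_eq (n-1) (τ-1)
      rw [show n - 1 + 1 = n from by omega, show τ - 1 + 1 = τ from by omega] at h
      exact h
    have keyR : (n:ℝ) * ((n-1).choose (τ-1) : ℝ) = (n.choose τ : ℝ) * τ := by
      exact_mod_cast key
    rw [div_eq_div_iff hcR.ne' hnR.ne']
    linear_combination keyR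
  · rw [if_neg hij]
    rcases eq_or_lt_of_le hτ1 with h1 | h2
    · rw [← h1, count_offdiag_one hij]
      simp [← h1]
    · have hτ2 : 2 ≤ τ := h2
      have hn2 : 2 ≤ n := le_trans hτ2 hτn
      have hmax : max (n-1) 1 = n - 1 := max_eq_left (by omega)
      rw [count_offdiag hτ2 hij, hmax]
      have key1 : (n-1) * (n-2).choose (τ-2) = (n-1).choose (τ-1) * (τ-1) := by
        have h := Nat.add_one_mul_choose_eq (n-2) (τ-2)
        rw [show n - 2 + 1 = n - 1 from by omega, show τ - 2 + 1 = τ - 1 from by omega] at h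
        exact h
      have key2 : n * (n-1).choose (τ-1) = n.choose τ * τ := by
        have h := Nat.add_one_mul_choose_eq (n-1) (τ-1)
        rw [show n - 1 + 1 = n from by omega, show τ - 1 + 1 = τ from by omega] at h
        exact h
      have key : n * ((n-1) * (n-2).choose (τ-2)) = n.choose τ * τ * (τ-1) := by
        rw [key1, ← mul_assoc, key2]
      have keyR : (n:ℝ) * (((n:ℝ)-1) * ((n-2).choose (τ-2) : ℝ))
          = (n.choose τ : ℝ) * (τ:ℝ) * ((τ:ℝ)-1) := by
        have := congrArg (Nat.cast : ℕ → ℝ) key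
        push_cast [Nat.cast_sub (by omega : 1 ≤ n), Nat.cast_sub hτ1] at this
        linarith [this]
      have hd : ((n:ℝ) * (((n-1 : ℕ)):ℝ)) ≠ 0 := by
        rw [Nat.cast_sub (by omega : 1 ≤ n)]
        have : (2:ℝ) ≤ (n:ℝ) := by exact_mod_cast hn2
        push_cast
        nlinarith
      rw [div_eq_div_iff hcR.ne' hd]
      rw [Nat.cast_sub (by omega : 1 ≤ n)]
      push_cast
      linear_combination keyR

lemma isGreatest_quadform {n : ℕ} (J : Finset (Fin n)) (hJ : J.Nonempty) (A B : ℝ)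
    (hA0 : 0 < A) (hB0 : 0 ≤ B) (hBA : B ≤ A)
    (M : Matrix (Fin n) (Fin n) ℝ)
    (hM : ∀ i j, M i j = if i ∈ J ∧ j ∈ J then (if i = j then A else B) else 0) :
    IsGreatest {r : ℝ | ∃ h : Fin n → ℝ,
        h ⬝ᵥ (Matrix.diagonal fun i => M i i).mulVec h ≤ 1 ∧ r = h ⬝ᵥ M.mulVec h}
      ((A + ((J.card:ℝ)-1)*B)/A) := by
  have hcard : (0:ℝ) < (J.card:ℝ) := by exact_mod_cast hJ.card_pos
  have hd : ∀ i, M i i = if i ∈ J then A else 0 := by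
    intro i; rw [hM]; by_cases h : i ∈ J <;> simp [h]
  have hD : ∀ h : Fin n → ℝ,
      h ⬝ᵥ (Matrix.diagonal fun i => M i i).mulVec h = A * ∑ i ∈ J, h i ^ 2 := by
    intro h
    simp only [dotProduct, mulVec_diagonal]
    rw [Finset.mul_sum]
    refine ((Finset.sum_subset (subset_univ J) ?_).symm.trans (sum_congr rfl ?_))
    · intro i _ hi; rw [hd i, if_neg hi]; ring
    · intro i hi; rw [hd i, if_pos hi]; ring
  have hQ : ∀ h : Fin n → ℝ,
      h ⬝ᵥ M.mulVec h = (A - B) * (∑ i ∈ J, h i ^ 2) + B * (∑ i ∈ J, h i)^2 := by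
    intro h
    simp only [dotProduct, mulVec]
    calc ∑ i : Fin n, h i * ∑ j : Fin n, M i j * h j
        = ∑ i ∈ J, h i * ∑ j : Fin n, M i j * h j := by
          refine (Finset.sum_subset (subset_univ J) ?_).symm
          intro i _ hi
          have hz : ∀ j, M i j * h j = 0 := fun j => by rw [hM]; simp [hi]
          simp [hz]
      _ = ∑ i ∈ J, h i * ∑ j ∈ J, (if i = j then A else B) * h j := by
          refine sum_congr rfl fun i hi => ?_
          congr 1
          rw [← Finset.sum_subset (subset_univ J)
            (fun j _ hj => by rw [hM]; simp [hj])]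
          exact sum_congr rfl fun j hj => by rw [hM, if_pos ⟨hi, hj⟩]
      _ = ∑ i ∈ J, (B * (∑ j ∈ J, h j) * h i + (A - B) * h i ^ 2) := by
          refine sum_congr rfl fun i hi => ?_
          have e1 : ∑ j ∈ J, (if i = j then A else B) * h j
              = ∑ j ∈ J, (B * h j + (if i = j then (A - B) * h j else 0)) := by
            refine sum_congr rfl fun j _ => by split_ifs <;> ring
          rw [e1, Finset.sum_add_distrib, Finset.sum_ite_eq J i (fun j => (A - B) * h j),
            if_pos hi, ← Finset.mul_sum]
          ring
      _ = (A - B) * (∑ i ∈ J, h i ^ 2) + B * (∑ i ∈ J, h i)^2 := by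
          rw [Finset.sum_add_distrib, ← Finset.mul_sum, ← Finset.mul_sum]
          ring
  constructor
  · -- membership
    have hpos : (0:ℝ) < A * J.card := mul_pos hA0 hcard
    set t : ℝ := Real.sqrt (1/(A * J.card)) with hT
    have ht2 : t^2 = 1/(A * J.card) := Real.sq_sqrt (by positivity)
    refine ⟨fun i => if i ∈ J then t else 0, ?_, ?_⟩
    · rw [hD]
      have : ∑ i ∈ J, (if i ∈ J then t else 0)^2 = (J.card : ℝ) * t^2 := by
        rw [Finset.sum_congr rfl (fun i hi => by rw [if_pos hi]), Finset.sum_const,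
          nsmul_eq_mul]
      rw [this, ht2]
      rw [show A * ((J.card:ℝ) * (1/(A * J.card))) = 1 from by field_simp]
    · rw [hQ]
      have e2 : ∑ i ∈ J, (if i ∈ J then t else 0)^2 = (J.card : ℝ) * t^2 := by
        rw [Finset.sum_congr rfl (fun i hi => by rw [if_pos hi]), Finset.sum_const,
          nsmul_eq_mul]
      have e1 : ∑ i ∈ J, (if i ∈ J then t else 0) = (J.card : ℝ) * t := by
        rw [Finset.sum_congr rfl (fun i hi => by rw [if_pos hi]), Finset.sum_const,
          nsmul_eq_mul]
      have key : (A - B) * ((J.card:ℝ) * t^2) + B * ((J.card:ℝ)*t)^2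
          = (A + ((J.card:ℝ)-1)*B)/A := by
        rw [mul_pow, ht2]
        field_simp
        ring
      rw [e1, e2, key]
  · rintro r ⟨h, hcon, rfl⟩
    rw [hQ]
    rw [hD] at hcon
    set s1 := ∑ i ∈ J, h i with hs1def
    set s2 := ∑ i ∈ J, h i ^ 2 with hs2def
    have hs2nn : 0 ≤ s2 := Finset.sum_nonneg fun i _ => sq_nonneg _
    have hs1s2 : s1^2 ≤ (J.card:ℝ) * s2 := by
      exact_mod_cast sq_sum_le_card_mul_sum_sq (s := J) (f := h)
    have hcard1 : (1:ℝ) ≤ (J.card:ℝ) := by exact_mod_cast hJ.card_pos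
    have hcoef : 0 ≤ A + ((J.card:ℝ)-1)*B := by nlinarith
    have hs2le : s2 ≤ 1/A := by
      rw [le_div_iff₀ hA0]; linarith
    calc (A - B) * s2 + B * s1^2
        ≤ (A + ((J.card:ℝ)-1)*B) * s2 := by nlinarith [mul_nonneg hB0 (sub_nonneg.2 hs1s2)]
      _ ≤ (A + ((J.card:ℝ)-1)*B) * (1/A) := mul_le_mul_of_nonneg_left hs2le hcoef
      _ = (A + ((J.card:ℝ)-1)*B)/A := by rw [mul_one_div]

theorem lambdaPrime_restriction_tauNice
    {n τ : ℕ} (hτ1 : 1 ≤ τ) (hτn : τ ≤ n) (J : Finset (Fin n)) (hJ : J.Nonempty) :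
    lambdaPrime (fun i j => if i ∈ J ∧ j ∈ J then probMatrixPMF (tauNice n τ) i j else 0) =
      1 + ((J.card : ℝ) - 1) * ((τ : ℝ) - 1) / (max (n - 1) 1 : ℕ) := by
  have hn1 : 1 ≤ n := le_trans hτ1 hτn
  have hτR : (0:ℝ) < (τ:ℝ) := by exact_mod_cast hτ1
  have hnR : (0:ℝ) < (n:ℝ) := by exact_mod_cast hn1
  have hmR : (1:ℝ) ≤ ((max (n-1) 1 : ℕ):ℝ) := by exact_mod_cast le_max_right (n-1) 1
  have hmR0 : (0:ℝ) < ((max (n-1) 1 : ℕ):ℝ) := lt_of_lt_of_le zero_lt_one hmR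
  set A : ℝ := (τ:ℝ)/n with hA
  set B : ℝ := (τ:ℝ)*((τ:ℝ)-1)/((n:ℝ)*((max (n-1) 1 : ℕ):ℝ)) with hB
  have hA0 : 0 < A := div_pos hτR hnR
  have hτ1R : (1:ℝ) ≤ (τ:ℝ) := by exact_mod_cast hτ1
  have hτm : (τ:ℝ) - 1 ≤ ((max (n-1) 1 : ℕ):ℝ) := by
    have h1 : τ - 1 ≤ max (n-1) 1 := by omega
    calc (τ:ℝ) - 1 = ((τ - 1 : ℕ):ℝ) := by rw [Nat.cast_sub hτ1]; norm_num
      _ ≤ ((max (n-1) 1 : ℕ):ℝ) := by exact_mod_cast h1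
  have hB0 : 0 ≤ B := by
    apply div_nonneg
    · nlinarith
    · positivity
  have hBA : B ≤ A := by
    rw [hA, hB, div_le_div_iff₀ (by positivity) hnR]
    nlinarith [mul_le_mul_of_nonneg_left hτm (mul_pos hτR hnR).le]
  have hM : ∀ i j : Fin n,
      (fun i j => if i ∈ J ∧ j ∈ J then probMatrixPMF (tauNice n τ) i j else 0) i j
        = if i ∈ J ∧ j ∈ J then (if i = j then A else B) else 0 := by
    intro i j
    simp only
    rw [entry_eq hτ1 hτn i j]
  have hg := isGreatest_quadform J hJ A B hA0 hB0 hBA _ hM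
  unfold lambdaPrime
  rw [hg.csSup_eq]
  rw [hA, hB]
  field_simp
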